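/- A simplicial set X is lower 2-Segal if and only if its lower décalage dec_⊥X is Segal. -/

import Mathlib

open CategoryTheory Simplicial

universe u

/-- A commuting square of sets (top `f`, left `g`, right `h`, bottom `k`) is a pullback
if the canonical map to the fiber product is a bijection. -/
def IsPullbackSet {A B C D : Type u} (f : A → B) (g : A → C) (h : B → D) (k : C → D) : Prop :=
  (∀ a, h (f a) = k (g a)) ∧ ∀ (b : B) (c : C), h b = k c → ∃! a : A, f a = b ∧ g a = c

/-- The lower 2-Segal condition: for every `n ≥ 2` (here `n = m + 2`) and every `0 < i < n`,
the square with top `d_i : X_{n+1} → X_n`, left `d_{n+1} : X_{n+1} → X_n`,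
right `d_n : X_n → X_{n-1}`, bottom `d_i : X_n → X_{n-1}` is a pullback. -/
def LowerTwoSegal (X : SSet.{u}) : Prop :=
  ∀ (m i : ℕ), 0 < i → ∀ h2 : i < m + 2,
    IsPullbackSet
      (fun x => X.δ (⟨i, by omega⟩ : Fin (m + 4)) x)
      (fun x => X.δ (⟨m + 3, by omega⟩ : Fin (m + 4)) x)
      (fun x => X.δ (⟨m + 2, by omega⟩ : Fin (m + 3)) x)
      (fun x => X.δ (⟨i, by omega⟩ : Fin (m + 3)) x)

/-- The Segal condition for the lower décalage `dec⊥ X` (which has `(dec⊥ X)_n = X_{n+1}`,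
with `k`-th face `d_{k+1} : X_{n+1} → X_n` for `0 ≤ k ≤ n`), stated explicitly in terms of
`X`: for every `n ≥ 1` (here `n = m + 1`), the Segal square of `dec⊥ X` with
top `d_0`, left `d_{n+1}`, right `d_n`, bottom `d_0` is the square with
top `d_1 : X_{m+3} → X_{m+2}`, left `d_{m+3} : X_{m+3} → X_{m+2}`,
right `d_{m+2} : X_{m+2} → X_{m+1}`, bottom `d_1 : X_{m+2} → X_{m+1}`. -/
def LowerDecSegal (X : SSet.{u}) : Prop :=
  ∀ m : ℕ,
    IsPullbackSet
      (fun x => X.δ (1 : Fin (m + 4)) x)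
      (fun x => X.δ (⟨m + 3, by omega⟩ : Fin (m + 4)) x)
      (fun x => X.δ (⟨m + 2, by omega⟩ : Fin (m + 3)) x)
      (fun x => X.δ (1 : Fin (m + 3)) x)

/-- Horizontal pasting of pullback squares of sets. -/
lemma IsPullbackSet.paste {A B C D B' D' : Type u}
    {f : A → B} {g : A → C} {h : B → D} {k : C → D}
    {f' : B → B'} {h' : B' → D'} {k' : D → D'}
    (H1 : IsPullbackSet f g h k) (H2 : IsPullbackSet f' h h' k') :
    IsPullbackSet (fun a => f' (f a)) g h' (fun c => k' (k c)) := by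
  obtain ⟨c1, e1⟩ := H1
  obtain ⟨c2, e2⟩ := H2
  constructor
  · intro a; rw [c2, c1]
  · intro b' c hbc
    obtain ⟨b, ⟨hb1, hb2⟩, hbu⟩ := e2 b' (k c) hbc
    obtain ⟨a, ⟨ha1, ha2⟩, hau⟩ := e1 b c hb2
    refine ⟨a, ⟨show f' (f a) = b' by rw [ha1, hb1], ha2⟩, ?_⟩
    rintro a' ⟨ha1', ha2'⟩
    have hfb : f a' = b := (hbu (f a') ⟨ha1', by rw [c1, ha2']⟩).trans rfl
    exact hau a' ⟨hfb, ha2'⟩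

/-- Cancellation: if the right square and the pasted square are pullbacks and the left
square commutes, then the left square is a pullback. -/
lemma IsPullbackSet.cancel {A B C D B' D' : Type u}
    {f : A → B} {g : A → C} {h : B → D} {k : C → D}
    {f' : B → B'} {h' : B' → D'} {k' : D → D'}
    (H2 : IsPullbackSet f' h h' k')
    (Hc : IsPullbackSet (fun a => f' (f a)) g h' (fun c => k' (k c)))
    (comm : ∀ a, h (f a) = k (g a)) :
    IsPullbackSet f g h k := by
  obtain ⟨c2, e2⟩ := H2
  obtain ⟨cc, ec⟩ := Hc
  refine ⟨comm, ?_⟩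
  intro b c hbc
  obtain ⟨a, ⟨ha1, ha2⟩, hau⟩ := ec (f' b) c (by rw [c2, hbc])
  have hfab : f a = b := by
    obtain ⟨b0, _, hbu⟩ := e2 (f' b) (k c) (by rw [c2, hbc])
    have e1 : b = b0 := hbu b ⟨rfl, hbc⟩
    have e2' : f a = b0 := hbu (f a) ⟨ha1, by rw [comm, ha2]⟩
    rw [e2', ← e1]
  refine ⟨a, ⟨hfab, ha2⟩, ?_⟩
  rintro a' ⟨ha1', ha2'⟩
  exact hau a' ⟨show f' (f a') = f' b by rw [ha1'], ha2'⟩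

/-- Pointwise simplicial identity `d_a (d_{b+1} x) = d_b (d_a x)` for `a ≤ b`. -/
lemma delta_delta (X : SSet.{u}) (n a b : ℕ) (hab : a ≤ b) (hb : b < n + 2)
    (x : X _⦋n + 2⦌) :
    X.δ (⟨a, by omega⟩ : Fin (n + 2)) (X.δ (⟨b + 1, by omega⟩ : Fin (n + 3)) x)
      = X.δ (⟨b, hb⟩ : Fin (n + 2)) (X.δ (⟨a, by omega⟩ : Fin (n + 3)) x) := by
  have key := SimplicialObject.δ_comp_δ X
    (i := (⟨a, by omega⟩ : Fin (n + 2))) (j := (⟨b, hb⟩ : Fin (n + 2))) hab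
  have := congr_fun (congrArg (fun (φ : X _⦋n+2⦌ ⟶ X _⦋n⦌) => (φ : X _⦋n+2⦌ → X _⦋n⦌)) key) x
  simpa [types_comp_apply] using this

/-- The generic lower 2-Segal square, as a statement about `X`. -/
def Q (X : SSet.{u}) (m i : ℕ) (hi : i < m + 3) : Prop :=
  IsPullbackSet
    (fun x => X.δ (⟨i, by omega⟩ : Fin (m + 4)) x)
    (fun x => X.δ (⟨m + 3, by omega⟩ : Fin (m + 4)) x)
    (fun x => X.δ (⟨m + 2, by omega⟩ : Fin (m + 3)) x)
    (fun x => X.δ (⟨i, by omega⟩ : Fin (m + 3)) x)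

lemma one_fin (n : ℕ) : (1 : Fin (n + 3)) = (⟨1, by omega⟩ : Fin (n + 3)) := by
  ext; simp [Fin.val_one]

lemma dec_eq_Q1 (X : SSet.{u}) (m : ℕ) :
    (IsPullbackSet
      (fun x => X.δ (1 : Fin (m + 4)) x)
      (fun x => X.δ (⟨m + 3, by omega⟩ : Fin (m + 4)) x)
      (fun x => X.δ (⟨m + 2, by omega⟩ : Fin (m + 3)) x)
      (fun x => X.δ (1 : Fin (m + 3)) x)) ↔ Q X m 1 (by omega) := by
  rw [Q, one_fin (m + 1), one_fin m]

/-- The induction step: the `(i+1)`-st square at level `m+1` follows from the `i`-th square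
at level `m` together with two Segal (`i = 1`) squares. -/
lemma Qstep (X : SSet.{u}) (m i : ℕ) (h1 : 1 ≤ i) (h2 : i < m + 2)
    (Hi : Q X m i (by omega)) (Hm : Q X m 1 (by omega)) (Hm1 : Q X (m + 1) 1 (by omega)) :
    Q X (m + 1) (i + 1) (by omega) := by
  -- composite of the Segal square at level m+1 with the i-th square at level m
  have Hcomp := IsPullbackSet.paste Hm1 Hi
  -- rewrite the top/bottom composites using the simplicial identity d_1 d_{i+1} = d_i d_1
  have htop : (fun x : X _⦋m + 4⦌ =>
        X.δ (⟨i, by omega⟩ : Fin (m + 4)) (X.δ (⟨1, by omega⟩ : Fin (m + 5)) x))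
      = (fun x => X.δ (⟨1, by omega⟩ : Fin (m + 4)) (X.δ (⟨i + 1, by omega⟩ : Fin (m + 5)) x)) := by
    funext x
    exact (delta_delta X (m + 2) 1 i h1 (by omega) x).symm
  have hbot : (fun x : X _⦋m + 3⦌ =>
        X.δ (⟨i, by omega⟩ : Fin (m + 3)) (X.δ (⟨1, by omega⟩ : Fin (m + 4)) x))
      = (fun x => X.δ (⟨1, by omega⟩ : Fin (m + 3)) (X.δ (⟨i + 1, by omega⟩ : Fin (m + 4)) x)) := by
    funext x
    exact (delta_delta X (m + 1) 1 i h1 (by omega) x).symm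
  rw [show (fun x : X _⦋m + 4⦌ =>
      X.δ (⟨i, by omega⟩ : Fin (m + 4)) (X.δ (⟨1, by omega⟩ : Fin (m + 5)) x)) = _ from htop,
    show (fun x : X _⦋m + 3⦌ =>
      X.δ (⟨i, by omega⟩ : Fin (m + 3)) (X.δ (⟨1, by omega⟩ : Fin (m + 4)) x)) = _ from hbot]
    at Hcomp
  -- cancel the Segal square at level m
  refine IsPullbackSet.cancel Hm Hcomp ?_
  intro x
  exact (delta_delta X (m + 2) (i + 1) (m + 3) (by omega) (by omega) x).symm

/-- A simplicial set `X` is lower 2-Segal if and only if its lower décalage `dec⊥ X`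
is Segal. -/
theorem lowerTwoSegal_iff_lowerDec_segal (X : SSet.{u}) :
    LowerTwoSegal X ↔ LowerDecSegal X := by
  constructor
  · intro H m
    rw [dec_eq_Q1]
    exact H m 1 one_pos (by omega)
  · intro H
    have HQ1 : ∀ m : ℕ, Q X m 1 (by omega) := fun m => (dec_eq_Q1 X m).mp (H m)
    have main : ∀ i m : ℕ, ∀ _h1 : 0 < i, ∀ _h2 : i < m + 2, Q X m i (by omega) := by
      intro i
      induction i with
      | zero => intro m h _; exact absurd h (lt_irrefl 0)
      | succ i ih =>
        intro m hpos hlt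
        rcases Nat.eq_or_lt_of_le (Nat.one_le_iff_ne_zero.mpr (by omega) : 1 ≤ i + 1) with he | hgt
        · have hi0 : i = 0 := by omega
          subst hi0
          exact HQ1 m
        · -- i ≥ 1, so m ≥ 1
          obtain ⟨m', rfl⟩ : ∃ m', m = m' + 1 := ⟨m - 1, by omega⟩
          exact Qstep X m' i (by omega) (by omega) (ih m' (by omega) (by omega))
            (HQ1 m') (HQ1 (m' + 1))
    intro m i hpos hlt
    exact main i m hpos hlt
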